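/- Robust value-difference identity: for any two stationary policies π₁ and π₂ and every s ∈ S, V^{π₁}(s) − V^{π₂}(s) = (1/(1−γ+γR))·Σ_{s'∈S} d^{π₂}_s(s')·Σ_{a∈A} (π₁(a|s') − π₂(a|s'))·Q^{π₁}(s',a) + (γR/(1−γ+γR))·(max_{s'} V^{π₁}(s') − max_{s'} V^{π₂}(s')). -/

import Mathlib

set_option autoImplicit false

open Finset

/-- The stochastic matrix of a policy `π` under the kernel `p`:
`P_π(s,s') = ∑ a, π(a|s)·p(s'|s,a)`. -/
noncomputable def pmat {S A : Type*} [Fintype A] (π : S → A → ℝ) (p : S → A → S → ℝ) :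
    Matrix S S ℝ :=
  Matrix.of fun s s' => ∑ a, π s a * p s a s'

/-- The discounted visitation distribution
`d^π_s(s') = (1-γ+γR)·∑_{t≥0} (γ(1-R))^t·(P_π^t)(s,s')`. -/
noncomputable def dvisit {S A : Type*} [Fintype S] [Fintype A] [DecidableEq S]
    (γ R : ℝ) (π : S → A → ℝ) (p : S → A → S → ℝ) (s s' : S) : ℝ :=
  (1 - γ + γ * R) * ∑' t : ℕ, (γ * (1 - R)) ^ t * ((pmat π p) ^ t) s s'

section aux
variable {S : Type*} [Fintype S] [Nonempty S] [DecidableEq S]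
variable (P : Matrix S S ℝ) (β : ℝ)

lemma aux_pow_nn (hnn : ∀ s s', 0 ≤ P s s') (t : ℕ) (s s' : S) : 0 ≤ (P ^ t) s s' := by
  induction t generalizing s s' with
  | zero => simp [Matrix.one_apply]; positivity
  | succ t ih =>
    rw [pow_succ', Matrix.mul_apply]
    exact Finset.sum_nonneg fun s'' _ => mul_nonneg (hnn s s'') (ih s'' s')

lemma aux_pow_sum (hsum : ∀ s, ∑ s', P s s' = 1) (t : ℕ) (s : S) :
    ∑ s', (P ^ t) s s' = 1 := by
  induction t generalizing s with
  | zero => simp [Matrix.one_apply]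
  | succ t ih =>
    simp only [pow_succ', Matrix.mul_apply]
    rw [Finset.sum_comm]
    calc ∑ s'', ∑ s', P s s'' * (P ^ t) s'' s'
        = ∑ s'', P s s'' * ∑ s', (P ^ t) s'' s' := by
          exact Finset.sum_congr rfl fun s'' _ => by rw [Finset.mul_sum]
      _ = 1 := by simp only [ih]; simpa using hsum s

lemma aux_pow_le1 (hnn : ∀ s s', 0 ≤ P s s') (hsum : ∀ s, ∑ s', P s s' = 1)
    (t : ℕ) (s s' : S) : (P ^ t) s s' ≤ 1 := by
  calc (P ^ t) s s' ≤ ∑ s'', (P ^ t) s s'' :=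
        Finset.single_le_sum (fun i _ => aux_pow_nn P hnn t s i) (Finset.mem_univ s')
    _ = 1 := aux_pow_sum P hsum t s

lemma aux_summable (hnn : ∀ s s', 0 ≤ P s s') (hsum : ∀ s, ∑ s', P s s' = 1)
    (hβ0 : 0 ≤ β) (hβ1 : β < 1) (w : S → ℝ) (s : S) :
    Summable (fun t : ℕ => β ^ t * ∑ s', (P ^ t) s s' * w s') := by
  apply Summable.of_norm_bounded (g := fun t : ℕ => β ^ t * ∑ s', |w s'|)
    ((summable_geometric_of_lt_one hβ0 hβ1).mul_right _)
  intro t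
  rw [Real.norm_eq_abs, abs_mul, abs_pow, abs_of_nonneg hβ0]
  apply mul_le_mul_of_nonneg_left _ (pow_nonneg hβ0 t)
  calc |∑ s', (P ^ t) s s' * w s'| ≤ ∑ s', |(P ^ t) s s' * w s'| :=
        Finset.abs_sum_le_sum_abs _ _
    _ ≤ ∑ s', |w s'| := by
        apply Finset.sum_le_sum
        intro s' _
        rw [abs_mul, abs_of_nonneg (aux_pow_nn P hnn t s s')]
        calc (P ^ t) s s' * |w s'| ≤ 1 * |w s'| :=
          mul_le_mul_of_nonneg_right (aux_pow_le1 P hnn hsum t s s') (abs_nonneg _)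
          _ = |w s'| := one_mul _
end aux

section aux2
set_option linter.unusedSectionVars false
variable {S : Type*} [Fintype S] [Nonempty S] [DecidableEq S]
variable (P : Matrix S S ℝ) (β : ℝ)

/-- The Neumann series satisfies the fixed-point equation. -/
lemma aux_F_rec (hnn : ∀ s s', 0 ≤ P s s') (hsum : ∀ s, ∑ s', P s s' = 1)
    (hβ0 : 0 ≤ β) (hβ1 : β < 1) (h : S → ℝ) (s : S) :
    (∑' t : ℕ, β ^ t * ∑ s', (P ^ t) s s' * h s')
      = h s + β * ∑ s', P s s' *
          (∑' t : ℕ, β ^ t * ∑ s'', (P ^ t) s' s'' * h s'') := by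
  rw [Summable.tsum_eq_zero_add (aux_summable P β hnn hsum hβ0 hβ1 h s)]
  have h0 : β ^ 0 * ∑ s', (P ^ 0) s s' * h s' = h s := by
    simp [Matrix.one_apply]
  rw [h0]
  congr 1
  have hterm : ∀ t : ℕ, β ^ (t + 1) * ∑ s', (P ^ (t + 1)) s s' * h s'
      = ∑ s', (β * P s s') * (β ^ t * ∑ s'', (P ^ t) s' s'' * h s'') := by
    intro t
    simp only [pow_succ', Matrix.mul_apply, Finset.sum_mul, Finset.mul_sum]
    rw [Finset.sum_comm]
    exact Finset.sum_congr rfl fun s' _ => Finset.sum_congr rfl fun s'' _ => by ring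
  calc (∑' t : ℕ, β ^ (t + 1) * ∑ s', (P ^ (t + 1)) s s' * h s')
      = ∑' t : ℕ, ∑ s', (β * P s s') * (β ^ t * ∑ s'', (P ^ t) s' s'' * h s'') := by
        exact tsum_congr hterm
    _ = ∑ s', ∑' t : ℕ, (β * P s s') * (β ^ t * ∑ s'', (P ^ t) s' s'' * h s'') := by
        apply Summable.tsum_finsetSum
        intro s' _
        exact (aux_summable P β hnn hsum hβ0 hβ1 h s').mul_left _
    _ = β * ∑ s', P s s' * (∑' t : ℕ, β ^ t * ∑ s'', (P ^ t) s' s'' * h s'') := by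
        rw [Finset.mul_sum]
        exact Finset.sum_congr rfl fun s' _ => by rw [tsum_mul_left]; ring

/-- Uniqueness of the fixed point. -/
lemma aux_unique (hnn : ∀ s s', 0 ≤ P s s') (hsum : ∀ s, ∑ s', P s s' = 1)
    (hβ0 : 0 ≤ β) (hβ1 : β < 1) (h D F : S → ℝ)
    (hD : ∀ s, D s = h s + β * ∑ s', P s s' * D s')
    (hF : ∀ s, F s = h s + β * ∑ s', P s s' * F s') :
    D = F := by
  set e : S → ℝ := fun s => D s - F s with he
  have herec : ∀ s, e s = β * ∑ s', P s s' * e s' := by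
    intro s
    simp only [he]
    rw [hD s, hF s]
    have hd : ∑ s', P s s' * (D s' - F s')
        = ∑ s', P s s' * D s' - ∑ s', P s s' * F s' := by
      rw [← Finset.sum_sub_distrib]
      exact Finset.sum_congr rfl fun s' _ => by ring
    rw [hd]
    ring
  obtain ⟨sm, _, hsm⟩ := Finset.exists_max_image univ (fun s => |e s|) univ_nonempty
  have hbound : |e sm| ≤ β * |e sm| := by
    calc |e sm| = |β * ∑ s', P sm s' * e s'| := by rw [← herec]
      _ = β * |∑ s', P sm s' * e s'| := by rw [abs_mul, abs_of_nonneg hβ0]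
      _ ≤ β * ∑ s', P sm s' * |e sm| := by
          apply mul_le_mul_of_nonneg_left _ hβ0
          calc |∑ s', P sm s' * e s'| ≤ ∑ s', |P sm s' * e s'| :=
              Finset.abs_sum_le_sum_abs _ _
            _ ≤ ∑ s', P sm s' * |e sm| := by
              apply Finset.sum_le_sum
              intro s' _
              rw [abs_mul, abs_of_nonneg (hnn sm s')]
              exact mul_le_mul_of_nonneg_left (hsm s' (Finset.mem_univ s')) (hnn sm s')
      _ = β * |e sm| := by rw [← Finset.sum_mul, hsum sm, one_mul]
  have hzero : |e sm| = 0 := by nlinarith [abs_nonneg (e sm)]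
  funext s
  have : |e s| ≤ 0 := by rw [← hzero]; exact hsm s (Finset.mem_univ s)
  have : e s = 0 := abs_eq_zero.mp (le_antisymm this (abs_nonneg _))
  simpa [he, sub_eq_zero] using this

end aux2

/-- **Robust value-difference identity**: for stationary policies `π₁, π₂` with robust value
functions `V₁, V₂` (fixed points of the respective robust Bellman operators) and robust
action-value function `Q₁` of `π₁`, for every state `s`,
`V^{π₁}(s) - V^{π₂}(s) = (1/(1-γ+γR))·∑_{s'} d^{π₂}_s(s')·∑_a (π₁(a|s') - π₂(a|s'))·Q^{π₁}(s',a)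
  + (γR/(1-γ+γR))·(max V^{π₁} - max V^{π₂})`. -/
theorem stmt_5 {S A : Type*} [Fintype S] [Fintype A] [Nonempty S] [Nonempty A] [DecidableEq S]
    (c : S → A → ℝ) (hc : ∀ s a, c s a ∈ Set.Icc (0 : ℝ) 1)
    (γ : ℝ) (hγ : γ ∈ Set.Ico (0 : ℝ) 1)
    (R : ℝ) (hR : R ∈ Set.Icc (0 : ℝ) 1)
    (p : S → A → S → ℝ) (hp : ∀ s a, p s a ∈ stdSimplex ℝ S)
    (π₁ π₂ : S → A → ℝ) (hπ₁ : ∀ s, π₁ s ∈ stdSimplex ℝ A) (hπ₂ : ∀ s, π₂ s ∈ stdSimplex ℝ A)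
    (V₁ V₂ : S → ℝ)
    (hV₁ : ∀ s, V₁ s = ∑ a, π₁ s a * (c s a + γ * (1 - R) * ∑ s', p s a s' * V₁ s'
      + γ * R * univ.sup' univ_nonempty V₁))
    (hV₂ : ∀ s, V₂ s = ∑ a, π₂ s a * (c s a + γ * (1 - R) * ∑ s', p s a s' * V₂ s'
      + γ * R * univ.sup' univ_nonempty V₂))
    (Q₁ : S → A → ℝ)
    (hQ₁ : ∀ s a, Q₁ s a = c s a + γ * (1 - R) * ∑ s', p s a s' * V₁ s'
      + γ * R * univ.sup' univ_nonempty V₁)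
    (s : S) :
    V₁ s - V₂ s = (1 / (1 - γ + γ * R)) *
        ∑ s', dvisit γ R π₂ p s s' * ∑ a, (π₁ s' a - π₂ s' a) * Q₁ s' a
      + (γ * R / (1 - γ + γ * R)) *
        (univ.sup' univ_nonempty V₁ - univ.sup' univ_nonempty V₂) := by
  obtain ⟨hγ0, hγ1⟩ := hγ
  obtain ⟨hR0, hR1⟩ := hR
  set β := γ * (1 - R) with hβ
  have hβ0 : 0 ≤ β := mul_nonneg hγ0 (by linarith)
  have hβ1 : β < 1 := lt_of_le_of_lt (by nlinarith) hγ1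
  have h1β : 1 - γ + γ * R = 1 - β := by rw [hβ]; ring
  have hne : (1 : ℝ) - β ≠ 0 := by linarith
  set M₁ := univ.sup' univ_nonempty V₁ with hM₁
  set M₂ := univ.sup' univ_nonempty V₂ with hM₂
  set P := pmat π₂ p with hPdef
  have hnn : ∀ s0 s' : S, 0 ≤ P s0 s' := by
    intro s0 s'
    exact Finset.sum_nonneg fun a _ => mul_nonneg ((hπ₂ s0).1 a) ((hp s0 a).1 s')
  have hsumP : ∀ s0 : S, ∑ s', P s0 s' = 1 := by
    intro s0
    show ∑ s', ∑ a, π₂ s0 a * p s0 a s' = 1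
    rw [Finset.sum_comm]
    calc ∑ a, ∑ s', π₂ s0 a * p s0 a s' = ∑ a, π₂ s0 a * ∑ s', p s0 a s' := by
          exact Finset.sum_congr rfl fun a _ => by rw [Finset.mul_sum]
      _ = ∑ a, π₂ s0 a := by
          exact Finset.sum_congr rfl fun a _ => by rw [(hp s0 a).2, mul_one]
      _ = 1 := (hπ₂ s0).2
  set K := γ * R * (M₁ - M₂) with hK
  set w : S → ℝ := fun s' => (∑ a, (π₁ s' a - π₂ s' a) * Q₁ s' a) + K with hw
  -- the value-difference satisfies the fixed-point recursion
  have hDrec : ∀ s0 : S, V₁ s0 - V₂ s0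
      = w s0 + β * ∑ s', P s0 s' * (V₁ s' - V₂ s') := by
    intro s0
    have e2 : ∑ s', P s0 s' * (V₁ s' - V₂ s')
        = ∑ a, π₂ s0 a * ∑ s', p s0 a s' * (V₁ s' - V₂ s') := by
      show ∑ s', (∑ a, π₂ s0 a * p s0 a s') * (V₁ s' - V₂ s') = _
      simp only [Finset.sum_mul, Finset.mul_sum]
      rw [Finset.sum_comm]
      exact Finset.sum_congr rfl fun s' _ => Finset.sum_congr rfl fun a _ => by ring
    have hsplit : ∀ a, ∑ s', p s0 a s' * (V₁ s' - V₂ s')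
        = (∑ s', p s0 a s' * V₁ s') - ∑ s', p s0 a s' * V₂ s' := by
      intro a
      rw [← Finset.sum_sub_distrib]
      exact Finset.sum_congr rfl fun s' _ => by ring
    rw [e2, hV₁ s0, hV₂ s0]
    simp only [hw, hQ₁, hsplit]
    have hKs : K = ∑ a, π₂ s0 a * K := by
      rw [← Finset.sum_mul, (hπ₂ s0).2, one_mul]
    rw [hKs]
    have hb : β * ∑ a, π₂ s0 a * ((∑ s', p s0 a s' * V₁ s') - ∑ s', p s0 a s' * V₂ s')
        = ∑ a, β * (π₂ s0 a * ((∑ s', p s0 a s' * V₁ s') - ∑ s', p s0 a s' * V₂ s')) :=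
      Finset.mul_sum _ _ _
    rw [hb, ← Finset.sum_sub_distrib, ← Finset.sum_add_distrib, ← Finset.sum_add_distrib]
    apply Finset.sum_congr rfl
    intro a _
    simp only [hK]
    ring
  -- the Neumann series
  set F : S → ℝ := fun s0 => ∑' t : ℕ, β ^ t * ∑ s', (P ^ t) s0 s' * w s' with hF
  have hFrec : ∀ s0 : S, F s0 = w s0 + β * ∑ s', P s0 s' * F s' := by
    intro s0
    exact aux_F_rec P β hnn hsumP hβ0 hβ1 w s0
  have hDF : (fun s0 => V₁ s0 - V₂ s0) = F :=
    aux_unique P β hnn hsumP hβ0 hβ1 w _ F hDrec hFrec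
  have hDs : V₁ s - V₂ s = F s := congrFun hDF s
  rw [hDs]
  -- split the Neumann series into the g-part and the constant part
  set g : S → ℝ := fun s' => ∑ a, (π₁ s' a - π₂ s' a) * Q₁ s' a with hg
  have hinner : ∀ t : ℕ, β ^ t * ∑ s', (P ^ t) s s' * w s'
      = (β ^ t * ∑ s', (P ^ t) s s' * g s') + β ^ t * K := by
    intro t
    have : ∑ s', (P ^ t) s s' * w s'
        = (∑ s', (P ^ t) s s' * g s') + ∑ s', (P ^ t) s s' * K := by
      rw [← Finset.sum_add_distrib]
      exact Finset.sum_congr rfl fun s' _ => by simp only [hw, hg]; ring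
    rw [this, ← Finset.sum_mul, aux_pow_sum P hsumP t s, one_mul, mul_add]
  have hsumg : Summable (fun t : ℕ => β ^ t * ∑ s', (P ^ t) s s' * g s') :=
    aux_summable P β hnn hsumP hβ0 hβ1 g s
  have hsumK : Summable (fun t : ℕ => β ^ t * K) :=
    (summable_geometric_of_lt_one hβ0 hβ1).mul_right K
  have hFs : F s = (∑' t : ℕ, β ^ t * ∑ s', (P ^ t) s s' * g s') + ∑' t : ℕ, β ^ t * K := by
    rw [hF]
    calc (∑' t : ℕ, β ^ t * ∑ s', (P ^ t) s s' * w s')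
        = ∑' t : ℕ, ((β ^ t * ∑ s', (P ^ t) s s' * g s') + β ^ t * K) := tsum_congr hinner
      _ = _ := Summable.tsum_add hsumg hsumK
  rw [hFs]
  -- evaluate the two pieces
  have hKpart : (∑' t : ℕ, β ^ t * K) = K * (1 - β)⁻¹ := by
    rw [tsum_mul_right, tsum_geometric_of_lt_one hβ0 hβ1, mul_comm]
  have hswap : (∑' t : ℕ, β ^ t * ∑ s', (P ^ t) s s' * g s')
      = ∑ s', g s' * ∑' t : ℕ, β ^ t * (P ^ t) s s' := by
    calc (∑' t : ℕ, β ^ t * ∑ s', (P ^ t) s s' * g s')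
        = ∑' t : ℕ, ∑ s', g s' * (β ^ t * (P ^ t) s s') := by
          apply tsum_congr
          intro t
          rw [Finset.mul_sum]
          exact Finset.sum_congr rfl fun s' _ => by ring
      _ = ∑ s', ∑' t : ℕ, g s' * (β ^ t * (P ^ t) s s') := by
          apply Summable.tsum_finsetSum
          intro s' _
          apply Summable.mul_left
          apply Summable.of_norm_bounded (g := fun t : ℕ => β ^ t)
            (summable_geometric_of_lt_one hβ0 hβ1)
          intro t
          rw [Real.norm_eq_abs, abs_mul, abs_pow, abs_of_nonneg hβ0,
            abs_of_nonneg (aux_pow_nn P hnn t s s')]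
          calc β ^ t * (P ^ t) s s' ≤ β ^ t * 1 :=
              mul_le_mul_of_nonneg_left (aux_pow_le1 P hnn hsumP t s s') (pow_nonneg hβ0 t)
            _ = β ^ t := mul_one _
      _ = ∑ s', g s' * ∑' t : ℕ, β ^ t * (P ^ t) s s' :=
          Finset.sum_congr rfl fun s' _ => tsum_mul_left
  rw [hswap]
  have hdv : ∀ s' : S, dvisit γ R π₂ p s s'
      = (1 - β) * ∑' t : ℕ, β ^ t * (P ^ t) s s' := by
    intro s'
    rw [dvisit, ← hβ, ← hPdef, h1β]
  have hrhs : ∑ s', dvisit γ R π₂ p s s' * ∑ a, (π₁ s' a - π₂ s' a) * Q₁ s' a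
      = (1 - β) * ∑ s', g s' * ∑' t : ℕ, β ^ t * (P ^ t) s s' := by
    rw [Finset.mul_sum]
    apply Finset.sum_congr rfl
    intro s' _
    rw [hdv s']
    simp only [hg]
    ring
  rw [h1β, hrhs, hKpart, hK]
  field_simp
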